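/- The standard action of S_{G,E} on E^∞ is topologically free if and only if the following two conditions hold: (1) every G-circuit has an entry; (2) for every vertex x ∈ E⁰ and every g ∈ G, if g fixes every point of Z(x), then g is slack at x. -/

import Mathlib

/-- Finite paths in a directed graph: `Pth.nil x` is the length-zero path at the
vertex `x`, and `Pth.cons e p` is the path whose first edge is `e`, followed by `p`. -/
inductive Pth (V : Type) (Ed : Type) : Type where
  | nil : V → Pth V Ed
  | cons : Ed → Pth V Ed → Pth V Ed

/-- A self-similar graph `(G, E, φ)`: a group `G` acting on a directed graph `E`
(with vertex set `V`, edge set `Ed`, range `r` and source `d`) by graph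
automorphisms, together with a one-cocycle `φ : G × E¹ → G` for the action on
edges, satisfying `φ(g,e)·x = g·x` for all vertices `x`. -/
structure SelfSimGraph (G V Ed : Type) [Group G] : Type where
  r : Ed → V
  d : Ed → V
  actV : G → V → V
  actE : G → Ed → Ed
  actV_one : ∀ x, actV 1 x = x
  actV_mul : ∀ g h x, actV (g * h) x = actV g (actV h x)
  actE_one : ∀ e, actE 1 e = e
  actE_mul : ∀ g h e, actE (g * h) e = actE g (actE h e)
  r_act : ∀ g e, r (actE g e) = actV g (r e)
  d_act : ∀ g e, d (actE g e) = actV g (d e)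
  phi : G → Ed → G
  phi_cocycle : ∀ g h e, phi (g * h) e = phi g (actE h e) * phi h e
  phi_vertex : ∀ g e x, actV (phi g e) x = actV g x

variable {G V Ed : Type} [Group G]

/-- The range `r(α)` of a finite path. -/
def rngP (S : SelfSimGraph G V Ed) : Pth V Ed → V
  | Pth.nil x => x
  | Pth.cons e _ => S.r e

/-- The source `d(α)` of a finite path. -/
def srcP (S : SelfSimGraph G V Ed) : Pth V Ed → V
  | Pth.nil x => x
  | Pth.cons _ p => srcP S p

/-- Well-formedness of a finite path: consecutive edges match, `d(αᵢ) = r(αᵢ₊₁)`. -/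
def WFP (S : SelfSimGraph G V Ed) : Pth V Ed → Prop
  | Pth.nil _ => True
  | Pth.cons e p => S.d e = rngP S p ∧ WFP S p

/-- The length of a finite path. -/
def lenP : Pth V Ed → ℕ
  | Pth.nil _ => 0
  | Pth.cons _ p => lenP p + 1

/-- Concatenation `αβ` of finite paths (meaningful when `d(α) = r(β)`). -/
def compP : Pth V Ed → Pth V Ed → Pth V Ed
  | Pth.nil _, q => q
  | Pth.cons e p, q => Pth.cons e (compP p q)

/-- The action of `G` extended to finite paths:
`g·x = g·x` on vertices and `g·(eα) = (g·e)(φ(g,e)·α)`. -/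
def actP (S : SelfSimGraph G V Ed) : G → Pth V Ed → Pth V Ed
  | g, Pth.nil x => Pth.nil (S.actV g x)
  | g, Pth.cons e p => Pth.cons (S.actE g e) (actP S (S.phi g e) p)

/-- The cocycle extended to finite paths:
`φ(g,x) = g` on vertices and `φ(g, eα) = φ(φ(g,e), α)`. -/
def phiP (S : SelfSimGraph G V Ed) : G → Pth V Ed → G
  | g, Pth.nil _ => g
  | g, Pth.cons e p => phiP S (S.phi g e) p

/-- A path `τ` is strongly fixed by `g` if `g·τ = τ` and `φ(g,τ) = 1`. -/
def StronglyFixed (S : SelfSimGraph G V Ed) (g : G) (τ : Pth V Ed) : Prop :=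
  WFP S τ ∧ actP S g τ = τ ∧ phiP S g τ = 1

/-- `(G,E,φ)` is pseudo free if `g·e = e` and `φ(g,e) = 1` imply `g = 1`. -/
def PseudoFree (S : SelfSimGraph G V Ed) : Prop :=
  ∀ (g : G) (e : Ed), S.actE g e = e → S.phi g e = 1 → g = 1

/-- `p` is a prefix (initial segment) of `q`: `q = pε` for some path `ε`. -/
def IsPrefixP (S : SelfSimGraph G V Ed) (p q : Pth V Ed) : Prop :=
  ∃ ε, WFP S ε ∧ rngP S ε = srcP S p ∧ compP p ε = q

/-- The set `M_g` of minimal strongly fixed paths for `g`: strongly fixed paths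
none of whose proper prefixes is strongly fixed. -/
def MinSF (S : SelfSimGraph G V Ed) (g : G) : Set (Pth V Ed) :=
  {μ | StronglyFixed S g μ ∧ ∀ p, IsPrefixP S p μ → p ≠ μ → ¬StronglyFixed S g p}

/-- Well-formedness of an infinite path, viewed as a sequence of edges:
`d(ξᵢ) = r(ξᵢ₊₁)`. -/
def InfWF (S : SelfSimGraph G V Ed) (ξ : ℕ → Ed) : Prop :=
  ∀ i, S.d (ξ i) = S.r (ξ (i + 1))

/-- The range `r(ξ)` of an infinite path. -/
def rngInf (S : SelfSimGraph G V Ed) (ξ : ℕ → Ed) : V := S.r (ξ 0)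

/-- `takeP S ξ n` is the finite path `ξ|ₙ = ξ₁⋯ξₙ` (with `ξ|₀ = r(ξ₁)`). -/
def takeP (S : SelfSimGraph G V Ed) : (ℕ → Ed) → ℕ → Pth V Ed
  | ξ, 0 => Pth.nil (S.r (ξ 0))
  | ξ, n + 1 => Pth.cons (ξ 0) (takeP S (fun i => ξ (i + 1)) n)

/-- Membership of an infinite path in the cylinder `Z(α)`:
the initial segment of `ξ` of length `|α|` equals `α`. -/
def InZ (S : SelfSimGraph G V Ed) (α : Pth V Ed) (ξ : ℕ → Ed) : Prop :=
  takeP S ξ (lenP α) = α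

/-- The infinite path `αξ` obtained by prepending a finite path to an infinite one. -/
def prepSeq : Pth V Ed → (ℕ → Ed) → ℕ → Ed
  | Pth.nil _, ξ, n => ξ n
  | Pth.cons e _, _, 0 => e
  | Pth.cons _ p, ξ, n + 1 => prepSeq p ξ n

/-- Dropping the first `k` edges of an infinite path. -/
def dropSeq (k : ℕ) (ξ : ℕ → Ed) : ℕ → Ed := fun n => ξ (n + k)

/-- The space `E^∞` of infinite paths. -/
def InfPath (S : SelfSimGraph G V Ed) : Type := {ξ : ℕ → Ed // InfWF S ξ}

/-- The topology of `E^∞`: the subspace topology induced from the product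
topology on `(E¹)^ℕ`, `E¹` being discrete.  Its basis consists of the
cylinders `Z(α)`. -/
def infTop (S : SelfSimGraph G V Ed) : TopologicalSpace (InfPath S) :=
  TopologicalSpace.induced (fun ξ => ξ.1)
    (@Pi.topologicalSpace ℕ (fun _ => Ed) (fun _ => ⊥))

/-- Specification of the (unique) action of `G` on `E^∞`: `(g·ξ)|ₙ = g·(ξ|ₙ)`. -/
def ActSpec (S : SelfSimGraph G V Ed) (act : G → (ℕ → Ed) → ℕ → Ed) : Prop :=
  ∀ (g : G) (ξ : ℕ → Ed) (n : ℕ), takeP S (act g ξ) n = actP S g (takeP S ξ n)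

/-- The action of a triple `s = (α, g, β) ∈ S_{G,E}` on `E^∞`: it sends
`βξ ∈ Z(β)` to `α(g·ξ)`. -/
def sActSeq (S : SelfSimGraph G V Ed) (act : G → (ℕ → Ed) → ℕ → Ed)
    (α : Pth V Ed) (g : G) (β : Pth V Ed) (ξ : ℕ → Ed) : ℕ → Ed :=
  prepSeq α (act g (dropSeq (lenP β) ξ))

/-- The set of fixed points in `E^∞` of the element `s = (α, g, β)` of `S_{G,E}`. -/
def FixSet (S : SelfSimGraph G V Ed) (act : G → (ℕ → Ed) → ℕ → Ed)
    (α : Pth V Ed) (g : G) (β : Pth V Ed) : Set (InfPath S) :=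
  {η | InZ S β η.1 ∧ sActSeq S act α g β η.1 = η.1}

/-- A vertex `x` is simple if `r⁻¹(x)` is a singleton. -/
def SimpleVtx (S : SelfSimGraph G V Ed) (x : V) : Prop := ∃! e : Ed, S.r e = x

/-- A path `γ = γ₁⋯γₙ` has no entry if `d(γᵢ)` is simple for every `i`. -/
def NoEntry (S : SelfSimGraph G V Ed) : Pth V Ed → Prop
  | Pth.nil _ => True
  | Pth.cons e p => SimpleVtx S (S.d e) ∧ NoEntry S p

/-- A circuit: a path `γ` of nonzero length with `d(γ) = r(γ)`. -/
def Circuit (S : SelfSimGraph G V Ed) (γ : Pth V Ed) : Prop :=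
  WFP S γ ∧ 1 ≤ lenP γ ∧ srcP S γ = rngP S γ

/-- A `G`-circuit: a pair `(g,γ)` with `γ` of nonzero length and `d(γ) = g·r(γ)`. -/
def GCircuit (S : SelfSimGraph G V Ed) (g : G) (γ : Pth V Ed) : Prop :=
  WFP S γ ∧ 1 ≤ lenP γ ∧ srcP S γ = S.actV g (rngP S γ)

/-- `g` is slack at `x` if all sufficiently long paths with range `x` are
strongly fixed by `g`. -/
def SlackAt (S : SelfSimGraph G V Ed) (g : G) (x : V) : Prop :=
  ∃ n : ℕ, ∀ γ, WFP S γ → rngP S γ = x → n ≤ lenP γ → StronglyFixed S g γ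

/-- The sequence `(γⁿ, gₙ)` attached to a `G`-circuit `(g, γ)`:
`γ¹ = γ`, `g₁ = g`, `γⁿ⁺¹ = gₙ·γⁿ`, `gₙ₊₁ = φ(gₙ, γⁿ)` (indexed from `0`). -/
def circIter (S : SelfSimGraph G V Ed) (g : G) (γ : Pth V Ed) : ℕ → Pth V Ed × G
  | 0 => (γ, g)
  | n + 1 =>
      (actP S (circIter S g γ n).2 (circIter S g γ n).1,
       phiP S (circIter S g γ n).2 (circIter S g γ n).1)

/-- The finite concatenation `γ¹γ²⋯γⁿ`. -/
def circConcat (S : SelfSimGraph G V Ed) (g : G) (γ : Pth V Ed) : ℕ → Pth V Ed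
  | 0 => Pth.nil (rngP S γ)
  | n + 1 => compP (circConcat S g γ n) (circIter S g γ n).1

/-- `ξ` is the infinite concatenation `ξ(g,γ) = γ¹γ²γ³⋯`: it is an infinite path
whose initial segments are the finite concatenations `γ¹⋯γⁿ`. -/
def IsCircPath (S : SelfSimGraph G V Ed) (g : G) (γ : Pth V Ed) (ξ : ℕ → Ed) : Prop :=
  InfWF S ξ ∧ ∀ n, takeP S ξ (lenP (circConcat S g γ n)) = circConcat S g γ n

/-- `x ⇀ y`: there is a finite path with source `x` and range `y`. -/
def RelPath (S : SelfSimGraph G V Ed) (x y : V) : Prop :=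
  ∃ α, WFP S α ∧ srcP S α = x ∧ rngP S α = y

/-- `x ∼ y`: `x` and `y` are in the same `G`-orbit. -/
def RelOrb (S : SelfSimGraph G V Ed) (x y : V) : Prop :=
  ∃ g : G, S.actV g x = y

/-- `x ≫ y`: there is a vertex `u` with `x ⇀ u ∼ y`. -/
def RelGG (S : SelfSimGraph G V Ed) (x y : V) : Prop :=
  ∃ u, RelPath S x u ∧ RelOrb S u y

/-- A nonzero element `(α, g, β)` of `S_{G,E}`: `α, β ∈ E*`, `g ∈ G`, with
`d(α) = g·d(β)`. -/
def SGETriple (S : SelfSimGraph G V Ed) : Type :=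
  {t : Pth V Ed × G × Pth V Ed //
    WFP S t.1 ∧ WFP S t.2.2 ∧ srcP S t.1 = S.actV t.2.1 (srcP S t.2.2)}

/-- The inverse semigroup `S_{G,E}` (as a set): the triples together with `0 = none`. -/
def SGE (S : SelfSimGraph G V Ed) : Type := Option (SGETriple S)

/-- Forget the membership proofs. -/
def sgeToRaw (S : SelfSimGraph G V Ed) : SGE S → Option (Pth V Ed × G × Pth V Ed) :=
  Option.map Subtype.val

/-- The adjoint: `(α, g, β)* = (β, g⁻¹, α)`, `0* = 0`. -/
def starSGE (S : SelfSimGraph G V Ed) : SGE S → SGE S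
  | none => none
  | some s =>
      some ⟨(s.1.2.2, s.1.2.1⁻¹, s.1.1),
        ⟨s.2.2.1, s.2.1, by
          rw [s.2.2.2, ← S.actV_mul, inv_mul_cancel, S.actV_one]⟩⟩

/-- The idempotent `f_α = (α, 1, α)`. -/
def fIdem (S : SelfSimGraph G V Ed) (α : Pth V Ed) (h : WFP S α) : SGE S :=
  some ⟨(α, 1, α), ⟨h, h, by rw [S.actV_one]⟩⟩

/-- Specification of the multiplication of `S_{G,E}`:
`0` is absorbing; `(α,g,β)(γ,h,δ) = (α(g·ε), φ(g,ε)h, δ)` if `γ = βε`;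
`(α,g,β)(γ,h,δ) = (α, gφ(h⁻¹,ε)⁻¹, δ(h⁻¹·ε))` if `β = γε`; `0` otherwise. -/
def MulSpec (S : SelfSimGraph G V Ed) (mul : SGE S → SGE S → SGE S) : Prop :=
  (∀ t, mul none t = none) ∧
  (∀ s, mul s none = none) ∧
  (∀ (s t : SGETriple S) (ε : Pth V Ed),
     WFP S ε → rngP S ε = srcP S s.1.2.2 → t.1.1 = compP s.1.2.2 ε →
       sgeToRaw S (mul (some s) (some t)) =
         some (compP s.1.1 (actP S s.1.2.1 ε), phiP S s.1.2.1 ε * t.1.2.1, t.1.2.2)) ∧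
  (∀ (s t : SGETriple S) (ε : Pth V Ed),
     WFP S ε → rngP S ε = srcP S t.1.1 → s.1.2.2 = compP t.1.1 ε →
       sgeToRaw S (mul (some s) (some t)) =
         some (s.1.1, s.1.2.1 * (phiP S t.1.2.1⁻¹ ε)⁻¹,
               compP t.1.2.2 (actP S t.1.2.1⁻¹ ε))) ∧
  (∀ (s t : SGETriple S),
     (¬∃ ε, WFP S ε ∧ rngP S ε = srcP S s.1.2.2 ∧ t.1.1 = compP s.1.2.2 ε) →
     (¬∃ ε, WFP S ε ∧ rngP S ε = srcP S t.1.1 ∧ s.1.2.2 = compP t.1.1 ε) →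
       mul (some s) (some t) = none)

/-- Topological freeness of the standard action of `S_{G,E}` on `E^∞`: for every
nonzero `s = (α, g, β)`, every interior fixed point `ζ` of `s` satisfies `α = β`
and `ζ ∈ Z(ατ)` for some `τ` strongly fixed by `g`. -/
def TopFree (S : SelfSimGraph G V Ed) (act : G → (ℕ → Ed) → ℕ → Ed) : Prop :=
  ∀ (α : Pth V Ed) (g : G) (β : Pth V Ed),
    WFP S α → WFP S β → srcP S α = S.actV g (srcP S β) →
    ∀ ζ : InfPath S, ζ ∈ @interior (InfPath S) (infTop S) (FixSet S act α g β) →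
      α = β ∧ ∃ τ : Pth V Ed, WFP S τ ∧ rngP S τ = srcP S α ∧
        StronglyFixed S g τ ∧ InZ S (compP α τ) ζ.1

section Aux

open Filter

variable {G V Ed : Type} [Group G]

/-! ### Basic algebraic lemmas on paths -/

lemma phi_one (S : SelfSimGraph G V Ed) (e : Ed) : S.phi 1 e = 1 := by
  have h := S.phi_cocycle 1 1 e
  rw [one_mul, S.actE_one] at h
  exact (left_eq_mul.mp h)

lemma actP_one (S : SelfSimGraph G V Ed) (p : Pth V Ed) : actP S 1 p = p := by
  induction p with
  | nil x => simp [actP, S.actV_one]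
  | cons e p ih => simp [actP, S.actE_one, phi_one, ih]

lemma phiP_one (S : SelfSimGraph G V Ed) (p : Pth V Ed) : phiP S 1 p = 1 := by
  induction p with
  | nil x => rfl
  | cons e p ih => simp [phiP, phi_one, ih]

lemma actP_mul (S : SelfSimGraph G V Ed) (p : Pth V Ed) :
    ∀ g h : G, actP S (g * h) p = actP S g (actP S h p) := by
  induction p with
  | nil x => intro g h; simp [actP, S.actV_mul]
  | cons e p ih =>
    intro g h
    simp only [actP, S.actE_mul, S.phi_cocycle]
    rw [ih]

lemma phiP_mul (S : SelfSimGraph G V Ed) (p : Pth V Ed) :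
    ∀ g h : G, phiP S (g * h) p = phiP S g (actP S h p) * phiP S h p := by
  induction p with
  | nil x => intro g h; rfl
  | cons e p ih =>
    intro g h
    simp only [phiP, actP, S.phi_cocycle]
    exact ih _ _

lemma phiP_vertex (S : SelfSimGraph G V Ed) (p : Pth V Ed) :
    ∀ (g : G) (x : V), S.actV (phiP S g p) x = S.actV g x := by
  induction p with
  | nil x => intro g x; rfl
  | cons e p ih => intro g x; simp only [phiP]; rw [ih, S.phi_vertex]

lemma rngP_actP (S : SelfSimGraph G V Ed) (g : G) (p : Pth V Ed) :
    rngP S (actP S g p) = S.actV g (rngP S p) := by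
  cases p with
  | nil x => rfl
  | cons e p => simp [actP, rngP, S.r_act]

lemma srcP_actP (S : SelfSimGraph G V Ed) (p : Pth V Ed) :
    ∀ g : G, srcP S (actP S g p) = S.actV g (srcP S p) := by
  induction p with
  | nil x => intro g; rfl
  | cons e p ih => intro g; simp only [actP, srcP]; rw [ih, S.phi_vertex]

lemma lenP_actP (S : SelfSimGraph G V Ed) (p : Pth V Ed) :
    ∀ g : G, lenP (actP S g p) = lenP p := by
  induction p with
  | nil x => intro g; rfl
  | cons e p ih => intro g; simp [actP, lenP, ih]

lemma WFP_actP (S : SelfSimGraph G V Ed) (p : Pth V Ed) :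
    ∀ g : G, WFP S p → WFP S (actP S g p) := by
  induction p with
  | nil x => intro g _; trivial
  | cons e p ih =>
    intro g hp
    exact ⟨by rw [S.d_act, hp.1, rngP_actP, S.phi_vertex], ih _ hp.2⟩

/-! ### Concatenation lemmas -/

lemma compP_assoc (p q t : Pth V Ed) :
    compP (compP p q) t = compP p (compP q t) := by
  induction p with
  | nil x => rfl
  | cons e p ih => simp [compP, ih]

lemma srcP_compP (S : SelfSimGraph G V Ed) (p q : Pth V Ed) :
    srcP S (compP p q) = srcP S q := by
  induction p with
  | nil x => rfl
  | cons e p ih => simpa [compP, srcP] using ih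

lemma lenP_compP (p q : Pth V Ed) : lenP (compP p q) = lenP p + lenP q := by
  induction p with
  | nil x => simp [compP, lenP]
  | cons e p ih => simp [compP, lenP, ih]; omega

lemma rngP_compP (S : SelfSimGraph G V Ed) (p q : Pth V Ed)
    (h : rngP S q = srcP S p) : rngP S (compP p q) = rngP S p := by
  cases p with
  | nil x => exact h
  | cons e p => rfl

lemma WFP_compP (S : SelfSimGraph G V Ed) {p q : Pth V Ed}
    (hp : WFP S p) (hq : WFP S q) (h : rngP S q = srcP S p) :
    WFP S (compP p q) := by
  induction p with
  | nil x => exact hq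
  | cons e p ih =>
    exact ⟨by rw [rngP_compP S p q h, hp.1], ih hp.2 h⟩

lemma WFP_compP_right (S : SelfSimGraph G V Ed) (p q : Pth V Ed)
    (h : WFP S (compP p q)) : WFP S q := by
  induction p with
  | nil x => exact h
  | cons e p ih => exact ih h.2

lemma NoEntry_compP_right (S : SelfSimGraph G V Ed) (p q : Pth V Ed)
    (h : NoEntry S (compP p q)) : NoEntry S q := by
  induction p with
  | nil x => exact h
  | cons e p ih => exact ih h.2

lemma actP_compP (S : SelfSimGraph G V Ed) (p : Pth V Ed) :
    ∀ (g : G) (q : Pth V Ed),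
      actP S g (compP p q) = compP (actP S g p) (actP S (phiP S g p) q) := by
  induction p with
  | nil x => intro g q; rfl
  | cons e p ih =>
    intro g q
    simp only [compP, actP, phiP]
    rw [ih]

lemma phiP_compP (S : SelfSimGraph G V Ed) (p : Pth V Ed) :
    ∀ (g : G) (q : Pth V Ed), phiP S g (compP p q) = phiP S (phiP S g p) q := by
  induction p with
  | nil x => intro g q; rfl
  | cons e p ih => intro g q; simp only [compP, phiP]; exact ih _ _

/-! ### takeP lemmas -/

lemma lenP_takeP (S : SelfSimGraph G V Ed) (n : ℕ) :
    ∀ ξ : ℕ → Ed, lenP (takeP S ξ n) = n := by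
  induction n with
  | zero => intro ξ; rfl
  | succ n ih => intro ξ; simp [takeP, lenP, ih]

lemma rngP_takeP (S : SelfSimGraph G V Ed) (n : ℕ) (ξ : ℕ → Ed) :
    rngP S (takeP S ξ n) = S.r (ξ 0) := by
  cases n with
  | zero => rfl
  | succ n => rfl

lemma srcP_takeP (S : SelfSimGraph G V Ed) (n : ℕ) :
    ∀ ξ : ℕ → Ed, srcP S (takeP S ξ n) = S.r (ξ n) := by
  induction n with
  | zero => intro ξ; rfl
  | succ n ih => intro ξ; simpa [takeP, srcP] using ih (fun i => ξ (i + 1))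

lemma InfWF_shift (S : SelfSimGraph G V Ed) {ξ : ℕ → Ed} (h : InfWF S ξ) :
    InfWF S (fun i => ξ (i + 1)) := fun i => h (i + 1)

lemma InfWF_dropSeq (S : SelfSimGraph G V Ed) (k : ℕ) {ξ : ℕ → Ed}
    (h : InfWF S ξ) : InfWF S (dropSeq k ξ) := by
  intro i
  dsimp [dropSeq]
  have h2 : i + 1 + k = i + k + 1 := by omega
  rw [h2]
  exact h (i + k)

lemma WFP_takeP (S : SelfSimGraph G V Ed) (n : ℕ) :
    ∀ ξ : ℕ → Ed, InfWF S ξ → WFP S (takeP S ξ n) := by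
  induction n with
  | zero => intro ξ _; trivial
  | succ n ih =>
    intro ξ hξ
    exact ⟨by rw [rngP_takeP]; exact hξ 0, ih _ (InfWF_shift S hξ)⟩

lemma takeP_add (S : SelfSimGraph G V Ed) (b : ℕ) :
    ∀ (a : ℕ) (ξ : ℕ → Ed),
      takeP S ξ (a + b) = compP (takeP S ξ a) (takeP S (dropSeq a ξ) b) := by
  intro a
  induction a with
  | zero =>
    intro ξ
    rw [Nat.zero_add]
    rfl
  | succ a ih =>
    intro ξ
    have h1 : a + 1 + b = (a + b) + 1 := by omega
    rw [h1]
    show Pth.cons (ξ 0) (takeP S (fun i => ξ (i + 1)) (a + b)) = _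
    rw [ih (fun i => ξ (i + 1))]
    have h2 : dropSeq a (fun i => ξ (i + 1)) = dropSeq (a + 1) ξ := by
      funext n; rfl
    rw [h2]
    rfl

lemma takeP_agree (S : SelfSimGraph G V Ed) (n : ℕ) :
    ∀ ξ ξ' : ℕ → Ed, takeP S ξ n = takeP S ξ' n → ∀ i < n, ξ i = ξ' i := by
  induction n with
  | zero => intro ξ ξ' _ i hi; omega
  | succ n ih =>
    intro ξ ξ' h i hi
    simp only [takeP] at h
    injection h with h1 h2
    cases i with
    | zero => exact h1
    | succ i => exact ih _ _ h2 i (by omega)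

lemma takeP_eq_of_agree (S : SelfSimGraph G V Ed) (n : ℕ) :
    ∀ ξ ξ' : ℕ → Ed, (∀ i ≤ n, ξ i = ξ' i) → takeP S ξ n = takeP S ξ' n := by
  induction n with
  | zero => intro ξ ξ' h; simp [takeP, h 0 (le_refl 0)]
  | succ n ih =>
    intro ξ ξ' h
    show Pth.cons (ξ 0) _ = Pth.cons (ξ' 0) _
    rw [h 0 (by omega), ih _ _ (fun i hi => h (i + 1) (by omega))]

lemma takeP_inj (S : SelfSimGraph G V Ed) {ξ ξ' : ℕ → Ed}
    (h : ∀ n, takeP S ξ n = takeP S ξ' n) : ξ = ξ' := by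
  funext i
  exact takeP_agree S (i + 1) ξ ξ' (h (i + 1)) i (by omega)

lemma noEntry_takeP (S : SelfSimGraph G V Ed) (n : ℕ) :
    ∀ ξ : ℕ → Ed, (∀ i < n, SimpleVtx S (S.d (ξ i))) → NoEntry S (takeP S ξ n) := by
  induction n with
  | zero => intro ξ _; trivial
  | succ n ih =>
    intro ξ h
    exact ⟨h 0 (by omega), ih _ (fun i hi => h (i + 1) (by omega))⟩

/-! ### prepSeq lemmas -/

lemma prepSeq_add (p : Pth V Ed) (ξ : ℕ → Ed) (i : ℕ) :
    prepSeq p ξ (i + lenP p) = ξ i := by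
  induction p with
  | nil x => rfl
  | cons e p ih => exact ih

lemma dropSeq_prepSeq (p : Pth V Ed) (ξ : ℕ → Ed) :
    dropSeq (lenP p) (prepSeq p ξ) = ξ := by
  funext i; exact prepSeq_add p ξ i

lemma prepSeq_takeP_entry (S : SelfSimGraph G V Ed) (n : ℕ) :
    ∀ (ξ : ℕ → Ed) (η : ℕ → Ed) (i : ℕ), i < n →
      prepSeq (takeP S ξ n) η i = ξ i := by
  induction n with
  | zero => intro ξ η i hi; omega
  | succ n ih =>
    intro ξ η i hi
    cases i with
    | zero => rfl
    | succ i => exact ih _ _ i (by omega)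

lemma takeP_prepSeq (S : SelfSimGraph G V Ed) (p : Pth V Ed) :
    ∀ ξ : ℕ → Ed, S.r (ξ 0) = srcP S p →
      takeP S (prepSeq p ξ) (lenP p) = p := by
  induction p with
  | nil x => intro ξ h; show Pth.nil (S.r (prepSeq (Pth.nil x) ξ 0)) = Pth.nil x; rw [show prepSeq (Pth.nil x) ξ 0 = ξ 0 from rfl, h]; rfl
  | cons e p ih =>
    intro ξ h
    show Pth.cons _ (takeP S (fun i => prepSeq (Pth.cons e p) ξ (i + 1)) (lenP p)) = _
    rw [show (fun i => prepSeq (Pth.cons e p) ξ (i + 1)) = prepSeq p ξ from rfl]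
    rw [ih ξ h]
    rfl

lemma prepSeq_zero_rng (S : SelfSimGraph G V Ed) (p : Pth V Ed) (ξ : ℕ → Ed)
    (h : S.r (ξ 0) = srcP S p) : S.r (prepSeq p ξ 0) = rngP S p := by
  cases p with
  | nil x => exact h
  | cons e p => rfl

lemma InfWF_prepSeq (S : SelfSimGraph G V Ed) (p : Pth V Ed) :
    ∀ ξ : ℕ → Ed, WFP S p → InfWF S ξ → S.r (ξ 0) = srcP S p →
      InfWF S (prepSeq p ξ) := by
  induction p with
  | nil x => intro ξ _ hξ _; exact hξ
  | cons e p ih =>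
    intro ξ hp hξ hs
    intro i
    cases i with
    | zero =>
      show S.d e = S.r (prepSeq p ξ 0)
      rw [prepSeq_zero_rng S p ξ hs]
      exact hp.1
    | succ i => exact ih ξ hp.2 hξ hs i

/-! ### existence of infinite paths -/

lemma tail_exists (S : SelfSimGraph G V Ed) (hNS : ∀ x : V, ∃ e : Ed, S.r e = x)
    (y : V) : ∃ η : ℕ → Ed, InfWF S η ∧ S.r (η 0) = y := by
  choose f hf using hNS
  refine ⟨fun n => Nat.rec (f y) (fun _ prev => f (S.d prev)) n, fun i => (hf _).symm, hf y⟩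

lemma edge_ext (S : SelfSimGraph G V Ed) (hNS : ∀ x : V, ∃ e : Ed, S.r e = x)
    (e : Ed) : ∃ σ : ℕ → Ed, InfWF S σ ∧ σ 0 = e := by
  obtain ⟨η, hη, hη0⟩ := tail_exists S hNS (S.d e)
  refine ⟨fun n => Nat.casesOn n e η, fun i => ?_, rfl⟩
  cases i with
  | zero => exact hη0.symm
  | succ i => exact hη i

/-! ### simple vertices -/

lemma simple_act_down (S : SelfSimGraph G V Ed) {u : G} {v : V}
    (h : SimpleVtx S (S.actV u v)) : SimpleVtx S v := by
  obtain ⟨e, he, hun⟩ := h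
  have hinv : ∀ w : Ed, S.actE u⁻¹ (S.actE u w) = w := fun w => by
    rw [← S.actE_mul, inv_mul_cancel, S.actE_one]
  have hinvV : ∀ w : V, S.actV u⁻¹ (S.actV u w) = w := fun w => by
    rw [← S.actV_mul, inv_mul_cancel, S.actV_one]
  refine ⟨S.actE u⁻¹ e, by show S.r (S.actE u⁻¹ e) = v; rw [S.r_act, he, hinvV], ?_⟩
  intro f hfv
  have : S.actE u f = e := hun (S.actE u f) (by show S.r (S.actE u f) = S.actV u v; rw [S.r_act]; rw [show S.r f = v from hfv])
  rw [← this, hinv]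

lemma simple_act_up (S : SelfSimGraph G V Ed) {u : G} {v : V}
    (h : SimpleVtx S v) : SimpleVtx S (S.actV u v) := by
  apply simple_act_down S (u := u⁻¹)
  rwa [← S.actV_mul, inv_mul_cancel, S.actV_one]

lemma NoEntry_actP (S : SelfSimGraph G V Ed) (p : Pth V Ed) :
    ∀ g : G, NoEntry S p → NoEntry S (actP S g p) := by
  induction p with
  | nil x => intro g _; trivial
  | cons e p ih =>
    intro g h
    exact ⟨by rw [S.d_act]; exact simple_act_up S h.1, ih _ h.2⟩

lemma gcirc_act (S : SelfSimGraph G V Ed) {g : G} {γ : Pth V Ed}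
    (h : GCircuit S g γ) : GCircuit S (phiP S g γ) (actP S g γ) := by
  refine ⟨WFP_actP S γ g h.1, by rw [lenP_actP]; exact h.2.1, ?_⟩
  rw [srcP_actP, rngP_actP, phiP_vertex, h.2.2]

/-! ### strongly fixed paths -/

lemma SF_ext (S : SelfSimGraph G V Ed) {g : G} {p ε : Pth V Ed}
    (hsf : StronglyFixed S g p) (hε : WFP S ε) (hr : rngP S ε = srcP S p) :
    StronglyFixed S g (compP p ε) := by
  refine ⟨WFP_compP S hsf.1 hε hr, ?_, ?_⟩
  · rw [actP_compP, hsf.2.1, hsf.2.2, actP_one]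
  · rw [phiP_compP, hsf.2.2, phiP_one]

end Aux
section Aux2

open Filter Topology

variable {G V Ed : Type} [Group G]

/-! ### lemmas about the action on infinite paths -/

lemma act_entry0 (S : SelfSimGraph G V Ed) (act : G → (ℕ → Ed) → ℕ → Ed)
    (hact : ActSpec S act) (g : G) (η : ℕ → Ed) :
    act g η 0 = S.actE g (η 0) := by
  have h := hact g η 1
  simp only [takeP, actP] at h
  injection h

lemma act_shift (S : SelfSimGraph G V Ed) (act : G → (ℕ → Ed) → ℕ → Ed)
    (hact : ActSpec S act) (g : G) (η : ℕ → Ed) :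
    (fun j => act g η (j + 1)) = act (S.phi g (η 0)) (fun j => η (j + 1)) := by
  apply takeP_inj S
  intro n
  have h := hact g η (n + 1)
  simp only [takeP, actP] at h
  injection h with h1 h2
  rw [h2, hact (S.phi g (η 0)) (fun j => η (j + 1)) n]

lemma act_entry (S : SelfSimGraph G V Ed) (act : G → (ℕ → Ed) → ℕ → Ed)
    (hact : ActSpec S act) (i : ℕ) :
    ∀ (g : G) (η : ℕ → Ed),
      act g η i = S.actE (phiP S g (takeP S η i)) (η i) := by
  induction i with
  | zero => intro g η; exact act_entry0 S act hact g η
  | succ i ih =>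
    intro g η
    have h1 : act g η (i + 1) = act (S.phi g (η 0)) (fun j => η (j + 1)) i :=
      congrFun (act_shift S act hact g η) i
    rw [h1, ih]
    rfl

lemma act_mul_seq (S : SelfSimGraph G V Ed) (act : G → (ℕ → Ed) → ℕ → Ed)
    (hact : ActSpec S act) (g h : G) (η : ℕ → Ed) :
    act g (act h η) = act (g * h) η := by
  apply takeP_inj S
  intro n
  rw [hact, hact, hact, ← actP_mul]

lemma act_one_seq (S : SelfSimGraph G V Ed) (act : G → (ℕ → Ed) → ℕ → Ed)
    (hact : ActSpec S act) (η : ℕ → Ed) : act 1 η = η := by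
  apply takeP_inj S
  intro n
  rw [hact, actP_one]

lemma InfWF_act (S : SelfSimGraph G V Ed) (act : G → (ℕ → Ed) → ℕ → Ed)
    (hact : ActSpec S act) (g : G) {η : ℕ → Ed} (hη : InfWF S η) :
    InfWF S (act g η) := by
  intro i
  rw [act_entry S act hact i, act_entry S act hact (i + 1), S.d_act, S.r_act,
    phiP_vertex, phiP_vertex, hη i]

lemma act_prepSeq (S : SelfSimGraph G V Ed) (act : G → (ℕ → Ed) → ℕ → Ed)
    (hact : ActSpec S act) (p : Pth V Ed) :
    ∀ (g : G) (ξ : ℕ → Ed),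
      act g (prepSeq p ξ) = prepSeq (actP S g p) (act (phiP S g p) ξ) := by
  induction p with
  | nil x => intro g ξ; rfl
  | cons e p ih =>
    intro g ξ
    funext n
    cases n with
    | zero =>
      show act g (prepSeq (Pth.cons e p) ξ) 0 = S.actE g e
      rw [act_entry0 S act hact]
      rfl
    | succ n =>
      have h1 : act g (prepSeq (Pth.cons e p) ξ) (n + 1)
          = act (S.phi g e) (prepSeq p ξ) n := by
        have := congrFun (act_shift S act hact g (prepSeq (Pth.cons e p) ξ)) n
        exact this
      rw [h1, ih]
      rfl

/-! ### topology lemmas -/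

lemma cyl_open (S : SelfSimGraph G V Ed) [Finite Ed] (ζ : ℕ → Ed) (m : ℕ) :
    @IsOpen (ℕ → Ed) (@Pi.topologicalSpace ℕ (fun _ => Ed) (fun _ => ⊥))
      {η : ℕ → Ed | ∀ i < m, η i = ζ i} := by
  letI : TopologicalSpace Ed := ⊥
  haveI : DiscreteTopology Ed := ⟨rfl⟩
  have heq : {η : ℕ → Ed | ∀ i < m, η i = ζ i}
      = Set.pi (↑(Finset.range m)) (fun i => {ζ i}) := by
    ext η
    simp [Set.mem_pi]
  rw [heq]
  exact isOpen_set_pi (Finset.finite_toSet _) (fun i _ => isOpen_discrete _)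

lemma interior_cyl (S : SelfSimGraph G V Ed) [Finite Ed] {U : Set (InfPath S)}
    {ζ : InfPath S} (hζ : ζ ∈ @interior _ (infTop S) U) :
    ∃ m, ∀ ξ : InfPath S, (∀ i < m, ξ.1 i = ζ.1 i) → ξ ∈ U := by
  letI : TopologicalSpace Ed := ⊥
  letI tI : TopologicalSpace (InfPath S) := infTop S
  obtain ⟨O, hOU, hO, hζO⟩ := mem_interior.1 hζ
  obtain ⟨W, hW, hpre⟩ := isOpen_induced_iff.1 hO
  have hζW : ζ.1 ∈ W := by
    rw [← hpre] at hζO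
    exact hζO
  obtain ⟨I, u, hu, hsub⟩ := isOpen_pi_iff.1 hW ζ.1 hζW
  refine ⟨I.sup id + 1, fun ξ hξ => hOU ?_⟩
  rw [← hpre]
  show ξ.1 ∈ W
  apply hsub
  intro i hi
  have hlt : i < I.sup id + 1 := Nat.lt_succ_of_le (Finset.le_sup (f := id) hi)
  show ξ.1 i ∈ u i
  rw [hξ i hlt]
  exact (hu i hi).2

lemma cyl_interior (S : SelfSimGraph G V Ed) [Finite Ed] {U : Set (InfPath S)}
    (ζ : InfPath S) (m : ℕ)
    (h : ∀ ξ : InfPath S, (∀ i < m, ξ.1 i = ζ.1 i) → ξ ∈ U) :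
    ζ ∈ @interior _ (infTop S) U := by
  letI : TopologicalSpace Ed := ⊥
  letI tI : TopologicalSpace (InfPath S) := infTop S
  have hopen : IsOpen {ξ : InfPath S | ∀ i < m, ξ.1 i = ζ.1 i} := by
    apply isOpen_induced_iff.2
    exact ⟨{η : ℕ → Ed | ∀ i < m, η i = ζ.1 i}, cyl_open S ζ.1 m, rfl⟩
  exact interior_maximal (fun ξ hξ => h ξ hξ) hopen (fun i _ => rfl)

lemma cluster_seq [Finite Ed] (ξs : ℕ → ℕ → Ed) (e₀ : Ed) :
    ∃ ξ : ℕ → Ed, ∀ m, ∃ n, m ≤ n ∧ ∀ i < m, ξ i = ξs n i := by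
  letI : TopologicalSpace Ed := ⊥
  haveI : DiscreteTopology Ed := ⟨rfl⟩
  obtain ⟨ξ, hξ⟩ := exists_clusterPt_of_compactSpace (Filter.map ξs Filter.atTop)
  refine ⟨ξ, fun m => ?_⟩
  have hU : {η : ℕ → Ed | ∀ i < m, η i = ξ i} ∈ 𝓝 ξ := by
    apply IsOpen.mem_nhds
    · have heq : {η : ℕ → Ed | ∀ i < m, η i = ξ i}
          = Set.pi (↑(Finset.range m)) (fun i => {ξ i}) := by
        ext η; simp [Set.mem_pi]
      rw [heq]
      exact isOpen_set_pi (Finset.finite_toSet _) (fun i _ => isOpen_discrete _)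
    · exact fun i _ => rfl
  have hV : ξs '' Set.Ici m ∈ Filter.map ξs Filter.atTop :=
    Filter.image_mem_map (Filter.Ici_mem_atTop m)
  obtain ⟨y, hyU, hyV⟩ := clusterPt_iff_nonempty.1 hξ hU hV
  obtain ⟨n, hn, rfl⟩ := hyV
  exact ⟨n, hn, fun i hi => (hyU i hi).symm⟩

end Aux2
section Aux3

open Filter Topology

variable {G V Ed : Type} [Group G]

/-- Determination: a fixed sequence is determined by its first `b` entries. -/
lemma detEq (S : SelfSimGraph G V Ed) (act : G → (ℕ → Ed) → ℕ → Ed)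
    (hact : ActSpec S act) {a b : ℕ} (hab : a < b) {h : G} {ξ ξ' : ℕ → Ed}
    (h1 : dropSeq b ξ = act h (dropSeq a ξ))
    (h2 : dropSeq b ξ' = act h (dropSeq a ξ'))
    (hagr : ∀ i < b, ξ i = ξ' i) : ∀ p, ξ p = ξ' p := by
  intro p
  induction p using Nat.strong_induction_on with
  | _ p IH =>
    by_cases hp : p < b
    · exact hagr p hp
    · push_neg at hp
      have hib : (p - b) + b = p := by omega
      have e1 : ξ p = dropSeq b ξ (p - b) := by dsimp [dropSeq]; rw [hib]
      have e1' : ξ' p = dropSeq b ξ' (p - b) := by dsimp [dropSeq]; rw [hib]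
      rw [e1, e1', h1, h2, act_entry S act hact, act_entry S act hact]
      have htk : takeP S (dropSeq a ξ) (p - b) = takeP S (dropSeq a ξ') (p - b) := by
        apply takeP_eq_of_agree
        intro i hi
        dsimp [dropSeq]
        exact IH (i + a) (by omega)
      have hen : dropSeq a ξ (p - b) = dropSeq a ξ' (p - b) := by
        dsimp [dropSeq]
        exact IH ((p - b) + a) (by omega)
      rw [htk, hen]

/-- Key contradiction: a "shifted self-similarity" relation valid on a whole
cylinder around `ζ` contradicts the entry condition for `G`-circuits. -/
lemma lemA (S : SelfSimGraph G V Ed)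
    (hNS : ∀ x : V, ∃ e : Ed, S.r e = x)
    (act : G → (ℕ → Ed) → ℕ → Ed) (hact : ActSpec S act)
    (hCirc : ∀ (g : G) (γ : Pth V Ed), GCircuit S g γ → ¬NoEntry S γ)
    (ζ : InfPath S) {a b m : ℕ} (hab : a < b) (hbm : b ≤ m) (h : G)
    (H : ∀ ξ : InfPath S, (∀ i < m, ξ.1 i = ζ.1 i) →
      dropSeq b ξ.1 = act h (dropSeq a ξ.1)) : False := by
  have hζwf := ζ.2
  have Hζ := H ζ (fun _ _ => rfl)
  -- the G-circuit
  have hGC : GCircuit S h (takeP S (dropSeq a ζ.1) (b - a)) := by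
    refine ⟨WFP_takeP S _ _ (InfWF_dropSeq S a hζwf), by rw [lenP_takeP]; omega, ?_⟩
    have h0 : ζ.1 (0 + b) = S.actE h (ζ.1 (0 + a)) := by
      have := congrFun Hζ 0
      rwa [act_entry0 S act hact] at this
    rw [srcP_takeP, rngP_takeP]
    dsimp [dropSeq]
    rw [show b - a + a = 0 + b by omega, h0, S.r_act]
  have hNE := hCirc h _ hGC
  have hex : ∃ i < b - a, ¬SimpleVtx S (S.d (ζ.1 (i + a))) := by
    by_contra hc
    push_neg at hc
    exact hNE (noEntry_takeP S (b - a) _ (fun i hi => hc i hi))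
  obtain ⟨i₀, hi₀lt, hi₀⟩ := hex
  -- propagation of non-simplicity
  have step : ∀ q, a ≤ q → ¬SimpleVtx S (S.d (ζ.1 q)) →
      ¬SimpleVtx S (S.d (ζ.1 (q + (b - a)))) := by
    intro q hq hns hSimp
    apply hns
    have hrel : ζ.1 ((q - a) + b)
        = S.actE (phiP S h (takeP S (dropSeq a ζ.1) (q - a))) (ζ.1 ((q - a) + a)) := by
      have := congrFun Hζ (q - a)
      rwa [act_entry S act hact] at this
    rw [show (q - a) + b = q + (b - a) by omega, show (q - a) + a = q by omega] at hrel
    rw [hrel, S.d_act] at hSimp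
    exact simple_act_down S hSimp
  have prop : ∀ t : ℕ, ¬SimpleVtx S (S.d (ζ.1 ((i₀ + a) + t * (b - a)))) := by
    intro t
    induction t with
    | zero => simpa using hi₀
    | succ t ih =>
      have := step ((i₀ + a) + t * (b - a)) (by omega) ih
      have e : (t + 1) * (b - a) = t * (b - a) + (b - a) := Nat.succ_mul t (b - a)
      rw [e, ← Nat.add_assoc]
      exact this
  have hjm : m ≤ (i₀ + a) + m * (b - a) := by
    have : m ≤ m * (b - a) := Nat.le_mul_of_pos_right m (by omega)
    omega
  set j := (i₀ + a) + m * (b - a) with hj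
  have hjns : ¬SimpleVtx S (S.d (ζ.1 j)) := prop m
  -- two distinct edges into that vertex
  obtain ⟨e₀, he₀⟩ := hNS (S.d (ζ.1 j))
  have hex2 : ∃ e₁, S.r e₁ = S.d (ζ.1 j) ∧ e₁ ≠ e₀ := by
    by_contra hc
    push_neg at hc
    exact hjns ⟨e₀, he₀, fun y hy => hc y hy⟩
  obtain ⟨e₁, he₁, hne⟩ := hex2
  -- build two extensions of ζ|_{j+1}
  have hWt : WFP S (takeP S ζ.1 (j + 1)) := WFP_takeP S _ _ hζwf
  have hsrct : srcP S (takeP S ζ.1 (j + 1)) = S.d (ζ.1 j) := by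
    rw [srcP_takeP]
    exact (hζwf j).symm
  have mk : ∀ e : Ed, S.r e = S.d (ζ.1 j) →
      ∃ ξ : InfPath S, (∀ i < m, ξ.1 i = ζ.1 i) ∧ ξ.1 (j + 1) = e := by
    intro e he
    obtain ⟨σ, hσ, hσ0⟩ := edge_ext S hNS e
    have hwf : InfWF S (prepSeq (takeP S ζ.1 (j + 1)) σ) := by
      apply InfWF_prepSeq S _ _ hWt hσ
      rw [hσ0, he, hsrct]
    refine ⟨⟨_, hwf⟩, fun i hi => ?_, ?_⟩
    · exact prepSeq_takeP_entry S (j + 1) _ _ i (by omega)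
    · show prepSeq (takeP S ζ.1 (j + 1)) σ (j + 1) = e
      have hp := prepSeq_add (takeP S ζ.1 (j + 1)) σ 0
      rw [lenP_takeP, Nat.zero_add] at hp
      rw [hp, hσ0]
  obtain ⟨ξ₀, hag₀, hend₀⟩ := mk e₀ he₀
  obtain ⟨ξ₁, hag₁, hend₁⟩ := mk e₁ he₁
  have heq : ∀ p, ξ₁.1 p = ξ₀.1 p := by
    apply detEq S act hact hab (H ξ₁ hag₁) (H ξ₀ hag₀)
    intro i hi
    rw [hag₀ i (by omega), hag₁ i (by omega)]
  have := heq (j + 1)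
  rw [hend₀, hend₁] at this
  exact hne this

end Aux3
/-- The standard action of `S_{G,E}` on `E^∞` is topologically free iff
(1) every `G`-circuit has an entry, and (2) whenever `g` fixes every point of
`Z(x)`, `g` is slack at `x`. -/
theorem statement17 {G V Ed : Type} [Group G] [Fintype V] [Fintype Ed]
    (S : SelfSimGraph G V Ed) (hNoSources : ∀ x : V, ∃ e : Ed, S.r e = x)
    (act : G → (ℕ → Ed) → ℕ → Ed) (hact : ActSpec S act) :
    TopFree S act ↔
      ((∀ (g : G) (γ : Pth V Ed), GCircuit S g γ → ¬NoEntry S γ) ∧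
       (∀ (x : V) (g : G),
          (∀ η : ℕ → Ed, InfWF S η → rngInf S η = x → act g η = η) →
          SlackAt S g x)) := by
  constructor
  · intro hTF
    constructor
    · -- (1): every G-circuit has an entry
      rintro g γ ⟨hWγ, hlγ, hsγ⟩ hNE
      cases γ with
      | nil x => simp [lenP] at hlγ
      | cons e₁ γ' =>
        choose f hf using fun e : Ed => hNoSources (S.d e)
        set ξ : ℕ → Ed := fun n => f^[n] e₁ with hξdef
        have hξ0 : ξ 0 = e₁ := rfl
        have hξs : ∀ n, ξ (n + 1) = f (ξ n) := fun n =>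
          Function.iterate_succ_apply' f n e₁
        have hwfξ : InfWF S ξ := fun i => by rw [hξs i, hf]
        -- invariant: every entry of ξ is the head of a tail of a no-entry G-circuit
        have inv : ∀ n, ∃ (h : G) (q p₀ : Pth V Ed) (e : Ed) (rest : Pth V Ed),
            GCircuit S h q ∧ NoEntry S q ∧ q = compP p₀ (Pth.cons e rest) ∧
            ξ n = e := by
          intro n
          induction n with
          | zero =>
            exact ⟨g, Pth.cons e₁ γ', Pth.nil (rngP S (Pth.cons e₁ γ')), e₁, γ',
              ⟨hWγ, hlγ, hsγ⟩, hNE, rfl, rfl⟩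
          | succ n ih =>
            obtain ⟨h, q, p₀, e, rest, hq, hqne, hdec, hξn⟩ := ih
            have hWp : WFP S (Pth.cons e rest) :=
              WFP_compP_right S p₀ _ (hdec ▸ hq.1)
            have hNEp : NoEntry S (Pth.cons e rest) :=
              NoEntry_compP_right S p₀ _ (hdec ▸ hqne)
            have hsimp : SimpleVtx S (S.d e) := hNEp.1
            have hξn1 : ξ (n + 1) = f e := by rw [hξs n, hξn]
            cases rest with
            | cons e₂ rest' =>
              have hfe : f e = e₂ := hsimp.unique (hf e) hWp.1.symm
              refine ⟨h, q, compP p₀ (Pth.cons e (Pth.nil (S.d e))), e₂, rest',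
                hq, hqne, ?_, by rw [hξn1, hfe]⟩
              rw [hdec, compP_assoc]
              rfl
            | nil v =>
              have hde : S.d e = v := hWp.1
              have hsrcq : srcP S q = v := by
                rw [hdec, srcP_compP]
                rfl
              have hde2 : S.d e = S.actV h (rngP S q) := by
                rw [hde, ← hsrcq]
                exact hq.2.2
              cases q with
              | nil w => exact absurd hq.2.1 (by simp [lenP])
              | cons eq qrest =>
                have hfeq : f e = S.actE h eq :=
                  hsimp.unique (hf e) (by rw [S.r_act]; exact hde2.symm)
                refine ⟨phiP S h (Pth.cons eq qrest), actP S h (Pth.cons eq qrest),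
                  Pth.nil (rngP S (actP S h (Pth.cons eq qrest))),
                  S.actE h eq, actP S (S.phi h eq) qrest,
                  gcirc_act S hq, NoEntry_actP S _ h hqne, rfl,
                  by rw [hξn1, hfeq]⟩
        have hsimple : ∀ n, SimpleVtx S (S.d (ξ n)) := by
          intro n
          obtain ⟨h, q, p₀, e, rest, hq, hqne, hdec, hξn⟩ := inv n
          have hNEp : NoEntry S (Pth.cons e rest) :=
            NoEntry_compP_right S p₀ _ (hdec ▸ hqne)
          rw [hξn]
          exact hNEp.1
        have huniq : ∀ η : ℕ → Ed, InfWF S η → η 0 = ξ 0 → η = ξ := by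
          intro η hη h0
          funext n
          induction n with
          | zero => exact h0
          | succ n ih =>
            exact (hsimple n).unique (by rw [← ih]; exact (hη n).symm) (hwfξ n).symm
        -- ξ is an interior fixed point of (γ, g, r(γ))
        have hfixmem : ∀ ξ' : InfPath S, ξ'.1 = ξ →
            ξ' ∈ FixSet S act (Pth.cons e₁ γ') g (Pth.nil (S.r e₁)) := by
          intro ξ' hh
          constructor
          · show takeP S ξ'.1 (lenP (Pth.nil (S.r e₁))) = Pth.nil (S.r e₁)
            rw [hh]
            rfl
          · show prepSeq (Pth.cons e₁ γ') (act g (dropSeq 0 ξ'.1)) = ξ'.1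
            rw [hh]
            apply huniq
            · apply InfWF_prepSeq S _ _ hWγ (InfWF_act S act hact g hwfξ)
              rw [act_entry0 S act hact, S.r_act, hξ0]
              exact hsγ.symm
            · rfl
        have hint : (⟨ξ, hwfξ⟩ : InfPath S) ∈
            @interior _ (infTop S) (FixSet S act (Pth.cons e₁ γ') g (Pth.nil (S.r e₁))) := by
          apply cyl_interior S _ 1
          intro ξ' hξ'
          exact hfixmem ξ' (huniq ξ'.1 ξ'.2 (hξ' 0 Nat.one_pos))
        have := (hTF (Pth.cons e₁ γ') g (Pth.nil (S.r e₁)) hWγ trivial hsγ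
          ⟨ξ, hwfξ⟩ hint).1
        cases this
    · -- (2): fixing Z(x) pointwise implies slackness
      intro x g hfix
      by_cases hg1 : g = 1
      · exact ⟨0, fun γ hW _ _ => hg1 ▸ ⟨hW, actP_one S γ, phiP_one S γ⟩⟩
      by_contra hns
      unfold SlackAt at hns
      push_neg at hns
      choose γw hw1 hw2 hw3 hw4 using hns
      have tl0 := fun n => tail_exists S hNoSources (srcP S (γw n))
      choose tl htl1 htl2 using tl0
      set ξs : ℕ → ℕ → Ed := fun n => prepSeq (γw (max n 1)) (tl (max n 1)) with hξsdef
      have hξswf : ∀ n, InfWF S (ξs n) :=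
        fun n => InfWF_prepSeq S _ _ (hw1 _) (htl1 _) (htl2 _)
      have hξsrng : ∀ n, S.r (ξs n 0) = x := fun n => by
        rw [hξsdef]
        show S.r (prepSeq (γw (max n 1)) (tl (max n 1)) 0) = x
        rw [prepSeq_zero_rng S _ _ (htl2 _)]
        exact hw2 _
      have hξstake : ∀ n, takeP S (ξs n) (lenP (γw (max n 1))) = γw (max n 1) :=
        fun n => takeP_prepSeq S _ _ (htl2 _)
      have hnotSF : ∀ n j, j ≤ lenP (γw (max n 1)) →
          ¬StronglyFixed S g (takeP S (ξs n) j) := by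
        intro n j hj hSF
        apply hw4 (max n 1)
        have hdecomp : γw (max n 1) = compP (takeP S (ξs n) j)
            (takeP S (dropSeq j (ξs n)) (lenP (γw (max n 1)) - j)) := by
          rw [← takeP_add, show j + (lenP (γw (max n 1)) - j) = lenP (γw (max n 1)) by omega]
          exact (hξstake n).symm
        rw [hdecomp]
        apply SF_ext S hSF (WFP_takeP S _ _ (InfWF_dropSeq S j (hξswf n)))
        rw [rngP_takeP, srcP_takeP]
        show S.r (ξs n (0 + j)) = _
        rw [Nat.zero_add]
      obtain ⟨ξ, hcl⟩ := cluster_seq ξs (ξs 0 0)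
      have hwfξ : InfWF S ξ := by
        intro i
        obtain ⟨n, hn, ha⟩ := hcl (i + 2)
        rw [ha i (by omega), ha (i + 1) (by omega)]
        exact hξswf n i
      have hrξ : S.r (ξ 0) = x := by
        obtain ⟨n, hn, ha⟩ := hcl 1
        rw [ha 0 Nat.one_pos]
        exact hξsrng n
      have hgfix : act g ξ = ξ := hfix ξ hwfξ hrξ
      have hgx : S.actV g x = x := by
        have h0 : act g ξ 0 = ξ 0 := congrFun hgfix 0
        rw [act_entry0 S act hact] at h0
        calc S.actV g x = S.r (S.actE g (ξ 0)) := by rw [S.r_act, hrξ]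
        _ = S.r (ξ 0) := by rw [h0]
        _ = x := hrξ
      have hint : (⟨ξ, hwfξ⟩ : InfPath S) ∈
          @interior _ (infTop S) (FixSet S act (Pth.nil x) g (Pth.nil x)) := by
        apply cyl_interior S _ 1
        intro ξ' hξ'
        have hr' : S.r (ξ'.1 0) = x := by rw [hξ' 0 Nat.one_pos]; exact hrξ
        constructor
        · show takeP S ξ'.1 0 = Pth.nil x
          show Pth.nil (S.r (ξ'.1 0)) = Pth.nil x
          rw [hr']
        · show prepSeq (Pth.nil x) (act g (dropSeq 0 ξ'.1)) = ξ'.1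
          exact hfix ξ'.1 ξ'.2 hr'
      obtain ⟨-, τ, hWτ, hrτ, hSFτ, hInZ⟩ := hTF (Pth.nil x) g (Pth.nil x)
        trivial trivial (by show x = S.actV g x; exact hgx.symm) ⟨ξ, hwfξ⟩ hint
      have hInZ' : takeP S ξ (lenP τ) = τ := hInZ
      obtain ⟨n, hn, ha⟩ := hcl (lenP τ + 1)
      have htk : takeP S ξ (lenP τ) = takeP S (ξs n) (lenP τ) :=
        takeP_eq_of_agree S _ _ _ (fun i hi => ha i (by omega))
      have hlen : lenP τ ≤ lenP (γw (max n 1)) := by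
        have h1 : max n 1 ≤ lenP (γw (max n 1)) := hw3 _
        have h2 : n ≤ max n 1 := le_max_left _ _
        omega
      exact hnotSF n (lenP τ) hlen (by rw [← htk, hInZ']; exact hSFτ)
  · -- converse direction
    rintro ⟨hCirc, hSlack⟩ α g β hWα hWβ hsrc ζ hζmem
    obtain ⟨m₀, hm₀⟩ := interior_cyl S hζmem
    set k := lenP β with hk
    set l := lenP α with hl
    set m := max m₀ (max k l + 1) with hmdef
    have hkm : k ≤ m := by
      have h1 : max k l + 1 ≤ m := le_max_right _ _
      have h2 : k ≤ max k l := le_max_left _ _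
      omega
    have hlm : l ≤ m := by
      have h1 : max k l + 1 ≤ m := le_max_right _ _
      have h2 : l ≤ max k l := le_max_right _ _
      omega
    have H : ∀ ξ : InfPath S, (∀ i < m, ξ.1 i = ζ.1 i) →
        ξ ∈ FixSet S act α g β := by
      intro ξ hξ
      exact hm₀ ξ (fun i hi => hξ i (lt_of_lt_of_le hi (le_max_left _ _)))
    have hζfix : ζ ∈ FixSet S act α g β := H ζ (fun _ _ => rfl)
    have hβ : takeP S ζ.1 k = β := hζfix.1
    have hζeq : prepSeq α (act g (dropSeq k ζ.1)) = ζ.1 := hζfix.2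
    have hrdrop : S.r (act g (dropSeq k ζ.1) 0) = srcP S α := by
      rw [act_entry0 S act hact, S.r_act]
      show S.actV g (S.r (ζ.1 (0 + k))) = srcP S α
      rw [Nat.zero_add, hsrc, ← hβ, srcP_takeP]
    have hα : takeP S ζ.1 l = α := by
      have := takeP_prepSeq S α (act g (dropSeq k ζ.1)) hrdrop
      rw [hζeq] at this
      exact this
    have Hdrop : ∀ ξ : InfPath S, (∀ i < m, ξ.1 i = ζ.1 i) →
        dropSeq l ξ.1 = act g (dropSeq k ξ.1) := by
      intro ξ hξ
      have h2 := (H ξ hξ).2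
      conv_lhs => rw [← h2]
      exact dropSeq_prepSeq α _
    rcases Nat.lt_trichotomy l k with hlt | heq | hgt
    · refine (lemA S hNoSources act hact hCirc ζ hlt hkm g⁻¹ ?_).elim
      intro ξ hξ
      rw [Hdrop ξ hξ, act_mul_seq S act hact, inv_mul_cancel, act_one_seq S act hact]
    · -- l = k : produce the strongly fixed prefix
      have hαβ : α = β := by rw [← hα, ← hβ, heq]
      refine ⟨hαβ, ?_⟩
      set μ := takeP S (dropSeq k ζ.1) (m - k) with hμdef
      have hWμ : WFP S μ := WFP_takeP S _ _ (InfWF_dropSeq S k ζ.2)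
      have hlenμ : lenP μ = m - k := lenP_takeP S _ _
      have hsμ : srcP S μ = S.r (ζ.1 m) := by
        rw [hμdef, srcP_takeP]
        show S.r (ζ.1 (m - k + k)) = _
        rw [show m - k + k = m by omega]
      have hrμ : rngP S μ = S.r (ζ.1 k) := by
        rw [hμdef, rngP_takeP]
        show S.r (ζ.1 (0 + k)) = _
        rw [Nat.zero_add]
      have hkey : ∀ η : ℕ → Ed, InfWF S η → S.r (η 0) = S.r (ζ.1 m) →
          actP S g μ = μ ∧ act (phiP S g μ) η = η := by
        intro η hη hηy
        have hWt : WFP S (takeP S ζ.1 m) := WFP_takeP S _ _ ζ.2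
        have hsrct : S.r (η 0) = srcP S (takeP S ζ.1 m) := by
          rw [srcP_takeP]
          exact hηy
        have hwfξf : InfWF S (prepSeq (takeP S ζ.1 m) η) :=
          InfWF_prepSeq S _ _ hWt hη hsrct
        have hagr : ∀ i < m, prepSeq (takeP S ζ.1 m) η i = ζ.1 i :=
          fun i hi => prepSeq_takeP_entry S m _ _ i hi
        have hrel := Hdrop ⟨_, hwfξf⟩ hagr
        rw [heq] at hrel
        have hdk : dropSeq k (prepSeq (takeP S ζ.1 m) η) = prepSeq μ η := by
          funext i
          by_cases hik : i < m - k
          · show prepSeq (takeP S ζ.1 m) η (i + k) = prepSeq μ η i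
            rw [prepSeq_takeP_entry S m _ _ (i + k) (by omega), hμdef,
              prepSeq_takeP_entry S (m - k) _ _ i hik]
            rfl
          · have h1 : dropSeq k (prepSeq (takeP S ζ.1 m) η) i = η (i + k - m) := by
              show prepSeq (takeP S ζ.1 m) η (i + k) = _
              have hp := prepSeq_add (takeP S ζ.1 m) η (i + k - m)
              rw [lenP_takeP, show (i + k - m) + m = i + k by omega] at hp
              exact hp
            have h2 : prepSeq μ η i = η (i - (m - k)) := by
              have hp := prepSeq_add μ η (i - (m - k))
              rw [hlenμ, show i - (m - k) + (m - k) = i by omega] at hp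
              exact hp
            rw [h1, h2, show i + k - m = i - (m - k) by omega]
        rw [hdk, act_prepSeq S act hact] at hrel
        have hrη : S.r (act (phiP S g μ) η 0) = srcP S (actP S g μ) := by
          rw [act_entry0 S act hact, S.r_act, phiP_vertex, srcP_actP, hsμ, hηy]
        have htake : μ = actP S g μ := by
          have t1 : takeP S (prepSeq μ η) (lenP μ) = μ :=
            takeP_prepSeq S μ η (by rw [hηy, hsμ])
          have t2 : takeP S (prepSeq (actP S g μ) (act (phiP S g μ) η)) (lenP μ)
              = actP S g μ := by
            have := takeP_prepSeq S (actP S g μ) (act (phiP S g μ) η) hrη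
            rw [lenP_actP] at this
            exact this
          conv_lhs => rw [← t1, hrel]
          exact t2
        have hdrop2 : act (phiP S g μ) η = η := by
          have d1 : dropSeq (lenP μ) (prepSeq μ η) = η := dropSeq_prepSeq μ η
          have d2 : dropSeq (lenP μ) (prepSeq (actP S g μ) (act (phiP S g μ) η))
              = act (phiP S g μ) η := by
            have := dropSeq_prepSeq (actP S g μ) (act (phiP S g μ) η)
            rw [lenP_actP] at this
            exact this
          rw [← d2, ← hrel, d1]
        exact ⟨htake.symm, hdrop2⟩
      obtain ⟨η₀, hη₀, hη₀y⟩ := tail_exists S hNoSources (S.r (ζ.1 m))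
      have hμfix : actP S g μ = μ := (hkey η₀ hη₀ hη₀y).1
      obtain ⟨n, hn⟩ := hSlack (S.r (ζ.1 m)) (phiP S g μ)
        (fun η hη hηy => (hkey η hη hηy).2)
      set ν := takeP S (dropSeq (m - k) (dropSeq k ζ.1)) n with hνdef
      have hWν : WFP S ν :=
        WFP_takeP S _ _ (InfWF_dropSeq S _ (InfWF_dropSeq S k ζ.2))
      have hrν : rngP S ν = S.r (ζ.1 m) := by
        rw [hνdef, rngP_takeP]
        show S.r (ζ.1 (0 + (m - k) + k)) = _
        rw [show 0 + (m - k) + k = m by omega]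
      have hSFν : StronglyFixed S (phiP S g μ) ν :=
        hn ν hWν hrν (by rw [hνdef, lenP_takeP])
      have hτdec : takeP S (dropSeq k ζ.1) ((m - k) + n) = compP μ ν := by
        rw [takeP_add, ← hμdef, ← hνdef]
      refine ⟨takeP S (dropSeq k ζ.1) ((m - k) + n),
        WFP_takeP S _ _ (InfWF_dropSeq S k ζ.2), ?_, ?_, ?_⟩
      · rw [rngP_takeP]
        show S.r (ζ.1 (0 + k)) = srcP S α
        rw [Nat.zero_add, hsrc, ← hβ, srcP_takeP]
        have := congrArg (rngP S) hμfix
        rw [rngP_actP, hrμ] at this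
        exact this.symm
      · rw [hτdec]
        refine ⟨WFP_compP S hWμ hWν (by rw [hrν, hsμ]), ?_, ?_⟩
        · rw [actP_compP, hμfix, hSFν.2.1]
        · rw [phiP_compP, hSFν.2.2]
      · show takeP S ζ.1 (lenP (compP α _)) = _
        have hlc : lenP (compP α (takeP S (dropSeq k ζ.1) ((m - k) + n)))
            = k + ((m - k) + n) := by
          rw [lenP_compP, lenP_takeP, ← hl, heq]
        rw [hlc, takeP_add, show takeP S ζ.1 k = α from by rw [← heq]; exact hα]
    · refine (lemA S hNoSources act hact hCirc ζ hgt hlm g ?_).elim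
      intro ξ hξ
      exact Hdrop ξ hξ
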